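/- Let n ≥ 1 be an integer, let u : ℍ → ℝ be continuous, and let ψ : ℍ → ℝ be smooth with compact support contained in ℍ. Then u ∗ ψ is smooth on ℍ, and for every z = (x,y) ∈ ℍ and every 1 ≤ i ≤ n−1: y · ∂_{x_i}(u ∗ ψ)(z) = (u ∗ X_iψ)(z) and y · ∂_y(u ∗ ψ)(z) = (u ∗ X_nψ)(z), where X_iψ is the function w = (ξ,η) ↦ η · (∂ψ/∂ξ_i)(w) and X_nψ is the function w = (ξ,η) ↦ η · (∂ψ/∂η)(w). That is, ℍ-convolution intertwines the left-invariant vector fields y∂_{x_i} and y∂_y. -/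

import Mathlib

set_option maxHeartbeats 1000000

open MeasureTheory
open scoped NNReal ENNReal

/-- Group multiplication on the half-space model `ℍ = ℝ^{n-1} × (0,∞)`:
`(ξ,η)·(x,y) = (ξ + ηx, ηy)`. -/
noncomputable def hyperMul (n : ℕ) (a b : EuclideanSpace ℝ (Fin (n - 1)) × ℝ) :
    EuclideanSpace ℝ (Fin (n - 1)) × ℝ :=
  (a.1 + a.2 • b.1, a.2 * b.2)

/-- Group inverse on the half-space model: `(x,y)⁻¹ = (-x/y, 1/y)`. -/
noncomputable def hyperInv (n : ℕ) (a : EuclideanSpace ℝ (Fin (n - 1)) × ℝ) :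
    EuclideanSpace ℝ (Fin (n - 1)) × ℝ :=
  ((-a.2⁻¹) • a.1, a.2⁻¹)

/-- The hyperbolic volume measure on `ℍ`, with density `y^{-n}` with respect to
Lebesgue measure on the open upper half-space. -/
noncomputable def hyperMeasure (n : ℕ) : Measure (EuclideanSpace ℝ (Fin (n - 1)) × ℝ) :=
  ((volume : Measure (EuclideanSpace ℝ (Fin (n - 1)) × ℝ)).restrict
      {z | 0 < z.2}).withDensity fun z => ENNReal.ofReal (z.2 ^ (-(n : ℝ)))

/-- The `ℍ`-convolution `(u ∗ ψ)(z) = ∫_ℍ u(w) ψ(w⁻¹·z) dμ(w)`. -/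
noncomputable def hyperConv (n : ℕ) (u ψ : EuclideanSpace ℝ (Fin (n - 1)) × ℝ → ℝ) :
    EuclideanSpace ℝ (Fin (n - 1)) × ℝ → ℝ :=
  fun z => ∫ w, u w * ψ (hyperMul n (hyperInv n w) z) ∂(hyperMeasure n)

/-! ### Auxiliary material -/

abbrev Hyp (n : ℕ) := EuclideanSpace ℝ (Fin (n - 1)) × ℝ

namespace HypAux

variable {n : ℕ}

lemma arg_def (n : ℕ) (w z : Hyp n) :
    hyperMul n (hyperInv n w) z = ((-w.2⁻¹) • w.1 + w.2⁻¹ • z.1, w.2⁻¹ * z.2) := rfl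

lemma arg_snd (w z : Hyp n) : (hyperMul n (hyperInv n w) z).2 = w.2⁻¹ * z.2 := rfl

lemma cancel (w z : Hyp n) (hw : w.2 ≠ 0) (hz : z.2 ≠ 0) :
    hyperMul n z (hyperInv n (hyperMul n (hyperInv n w) z)) = w := by
  have h2 : (hyperMul n (hyperInv n w) z).2 = w.2⁻¹ * z.2 := rfl
  refine Prod.ext ?_ ?_
  · show z.1 + z.2 • ((-(w.2⁻¹ * z.2)⁻¹) • ((-w.2⁻¹) • w.1 + w.2⁻¹ • z.1)) = w.1
    match_scalars <;> field_simp <;> ring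
  · show z.2 * (w.2⁻¹ * z.2)⁻¹ = w.2
    field_simp

lemma hasFDerivAt_arg (w z : Hyp n) :
    HasFDerivAt (fun z' : Hyp n => hyperMul n (hyperInv n w) z')
      (w.2⁻¹ • ContinuousLinearMap.id ℝ (Hyp n)) z := by
  have heq : (fun z' : Hyp n => hyperMul n (hyperInv n w) z')
      = fun z' : Hyp n => (((-w.2⁻¹) • w.1, (0 : ℝ)) : Hyp n) + w.2⁻¹ • z' := by
    funext z'
    refine Prod.ext ?_ ?_
    · show (-w.2⁻¹) • w.1 + w.2⁻¹ • z'.1 = (-w.2⁻¹) • w.1 + (w.2⁻¹ • z').1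
      rfl
    · show w.2⁻¹ * z'.2 = 0 + (w.2⁻¹ • z').2
      simp [Prod.smul_snd, smul_eq_mul]
  rw [heq]
  exact ((hasFDerivAt_id z).const_smul w.2⁻¹).const_add _

lemma measurable_arg (n : ℕ) (z : Hyp n) :
    Measurable (fun w : Hyp n => hyperMul n (hyperInv n w) z) := by
  simp only [arg_def]
  fun_prop

lemma ae_pos (n : ℕ) : ∀ᵐ w ∂(hyperMeasure n), 0 < w.2 := by
  have h0 : (volume.restrict {z : Hyp n | 0 < z.2}) {w : Hyp n | ¬ 0 < w.2} = 0 := by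
    rw [Measure.restrict_apply]
    · convert measure_empty (μ := (volume : Measure (Hyp n)))
      ext w
      simp only [Set.mem_inter_iff, Set.mem_setOf_eq, Set.mem_empty_iff_false, iff_false]
      tauto
    · exact (measurableSet_lt measurable_const measurable_snd).compl
  exact (withDensity_absolutelyContinuous _ _) h0

lemma measure_lt_top {K : Set (Hyp n)} (hK : IsCompact K) {c : ℝ} (hc : 0 < c)
    (hKc : ∀ w ∈ K, c ≤ w.2) : hyperMeasure n K < ⊤ := by
  have hKm : MeasurableSet K := hK.isClosed.measurableSet
  rw [hyperMeasure, withDensity_apply _ hKm]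
  calc ∫⁻ w in K, ENNReal.ofReal (w.2 ^ (-(n : ℝ)))
        ∂((volume : Measure (Hyp n)).restrict {z : Hyp n | 0 < z.2})
      ≤ ∫⁻ _ in K, ENNReal.ofReal (c ^ (-(n : ℝ)))
        ∂((volume : Measure (Hyp n)).restrict {z : Hyp n | 0 < z.2}) := by
        refine setLIntegral_mono' hKm fun w hw => ?_
        refine ENNReal.ofReal_le_ofReal ?_
        rw [Real.rpow_neg hc.le, Real.rpow_neg (hc.trans_le (hKc w hw)).le]
        exact inv_anti₀ (Real.rpow_pos_of_pos hc _)
          (Real.rpow_le_rpow hc.le (hKc w hw) (Nat.cast_nonneg n))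
    _ = ENNReal.ofReal (c ^ (-(n : ℝ)))
          * ((volume : Measure (Hyp n)).restrict {z : Hyp n | 0 < z.2}) K := by
        rw [setLIntegral_const]
    _ < ⊤ := by
        refine ENNReal.mul_lt_top ENNReal.ofReal_lt_top ?_
        exact (Measure.restrict_apply_le _ _).trans_lt hK.measure_lt_top

lemma integrable_of_supported {X : Type*} [NormedAddCommGroup X]
    {h : Hyp n → X} {K : Set (Hyp n)} (hK : IsCompact K) {c : ℝ} (hc : 0 < c)
    (hKc : ∀ w ∈ K, c ≤ w.2)
    (hmeas : AEStronglyMeasurable h (hyperMeasure n))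
    (h0 : ∀ w ∉ K, h w = 0) {C : ℝ} (hC : ∀ w ∈ K, ‖h w‖ ≤ C) :
    Integrable h (hyperMeasure n) := by
  have hKm : MeasurableSet K := hK.isClosed.measurableSet
  have heq : h = K.indicator h := by
    funext w
    by_cases hw : w ∈ K
    · rw [Set.indicator_of_mem hw]
    · rw [Set.indicator_of_notMem hw, h0 w hw]
  rw [heq, integrable_indicator_iff hKm]
  refine Measure.integrableOn_of_bounded (M := C) (measure_lt_top hK hc hKc).ne
    hmeas ?_
  exact (ae_restrict_iff' hKm).2 (Filter.Eventually.of_forall fun w hw => hC w hw)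

end HypAux

namespace HypAux

lemma exists_localization (n : ℕ) (ψ : Hyp n → ℝ)
    (hψcs : HasCompactSupport ψ) (hψs : tsupport ψ ⊆ {z : Hyp n | 0 < z.2})
    (z₀ : Hyp n) (hz₀ : 0 < z₀.2) :
    ∃ (ε c : ℝ) (K : Set (Hyp n)), 0 < ε ∧ 0 < c ∧ IsCompact K ∧ (∀ w ∈ K, c ≤ w.2) ∧
      (∀ z ∈ Metric.closedBall z₀ ε, 0 < z.2) ∧
      (∀ z ∈ Metric.closedBall z₀ ε, ∀ w ∉ K,
        ψ (hyperMul n (hyperInv n w) z) = 0 ∧ fderiv ℝ ψ (hyperMul n (hyperInv n w) z) = 0) := by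
  set ε := z₀.2 / 2 with hε
  have hεpos : 0 < ε := by positivity
  have hball : ∀ z ∈ Metric.closedBall z₀ ε, 0 < z.2 := by
    intro z hz
    have h1 : dist z.2 z₀.2 ≤ dist z z₀ := by
      rw [Prod.dist_eq]; exact le_max_right _ _
    rw [Metric.mem_closedBall] at hz
    rw [Real.dist_eq, abs_le] at h1
    linarith [h1.1]
  set K : Set (Hyp n) :=
    (fun q : Hyp n × Hyp n => hyperMul n q.1 (hyperInv n q.2)) ''
      (Metric.closedBall z₀ ε ×ˢ tsupport ψ) with hKdef
  have hcont : ContinuousOn (fun q : Hyp n × Hyp n => hyperMul n q.1 (hyperInv n q.2))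
      (Metric.closedBall z₀ ε ×ˢ tsupport ψ) := by
    have hne : ∀ q ∈ Metric.closedBall z₀ ε ×ˢ tsupport ψ, q.2.2 ≠ 0 :=
      fun q hq => ne_of_gt (hψs hq.2)
    have c1 : ContinuousOn (fun q : Hyp n × Hyp n => q.2.2⁻¹)
        (Metric.closedBall z₀ ε ×ˢ tsupport ψ) :=
      ContinuousOn.inv₀ (continuous_snd.snd.continuousOn) hne
    show ContinuousOn
      (fun q : Hyp n × Hyp n => ((q.1.1 + q.1.2 • ((-q.2.2⁻¹) • q.2.1), q.1.2 * q.2.2⁻¹) : Hyp n))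
      (Metric.closedBall z₀ ε ×ˢ tsupport ψ)
    refine ContinuousOn.prodMk ?_ ?_
    · exact (continuous_fst.fst.continuousOn).add
        ((continuous_fst.snd.continuousOn).smul
          ((c1.neg).smul (continuous_snd.fst.continuousOn)))
    · exact (continuous_fst.snd.continuousOn).mul c1
  have hK : IsCompact K :=
    ((isCompact_closedBall z₀ ε).prod hψcs).image_of_continuousOn hcont
  have hKpos : ∀ w ∈ K, 0 < w.2 := by
    rintro w ⟨⟨z, s⟩, ⟨hz, hs⟩, rfl⟩
    show 0 < z.2 * s.2⁻¹
    exact mul_pos (hball z hz) (inv_pos.2 (hψs hs))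
  obtain ⟨w₀, hw₀, hmin⟩ := (hK.insert z₀).exists_isMinOn
    ⟨z₀, Set.mem_insert _ _⟩ (continuous_snd.continuousOn)
  set c := w₀.2 with hcdef
  have hcpos : 0 < c := by
    rcases hw₀ with h | h
    · rw [hcdef, h]; exact hz₀
    · exact hKpos _ h
  have hKc : ∀ w ∈ K, c ≤ w.2 := fun w hw => hmin (Set.mem_insert_of_mem _ hw)
  refine ⟨ε, c, K, hεpos, hcpos, hK, hKc, hball, ?_⟩
  intro z hz w hw
  have hzpos := hball z hz
  have hnot : hyperMul n (hyperInv n w) z ∉ tsupport ψ := by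
    intro hmem
    by_cases hw2 : 0 < w.2
    · exact hw ⟨(z, hyperMul n (hyperInv n w) z), ⟨hz, hmem⟩,
        cancel w z hw2.ne' hzpos.ne'⟩
    · have : (hyperMul n (hyperInv n w) z).2 ≤ 0 := by
        rw [arg_snd]
        exact mul_nonpos_of_nonpos_of_nonneg (inv_nonpos.2 (not_lt.1 hw2)) hzpos.le
      exact absurd (hψs hmem) (not_lt.2 this)
  refine ⟨image_eq_zero_of_notMem_tsupport hnot, ?_⟩
  by_contra h
  exact hnot (support_fderiv_subset ℝ (Function.mem_support.2 h))

end HypAux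

namespace HypAux

lemma intertwine (n : ℕ) (u ψ : Hyp n → ℝ) (hu : Continuous u)
    (hψ : ContDiff ℝ (⊤ : ℕ∞) ψ) (hψcs : HasCompactSupport ψ)
    (hψs : tsupport ψ ⊆ {z : Hyp n | 0 < z.2})
    (z₀ : Hyp n) (hz₀ : 0 < z₀.2) (v : Hyp n) :
    z₀.2 * fderiv ℝ (hyperConv n u ψ) z₀ v =
      hyperConv n u (fun w => w.2 * fderiv ℝ ψ w v) z₀ := by
  obtain ⟨ε, c, K, hε, hc, hK, hKc, hball, hKz⟩ :=
    exists_localization n ψ hψcs hψs z₀ hz₀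
  have hz₀K : z₀ ∈ Metric.closedBall z₀ ε := Metric.mem_closedBall_self hε.le
  have hKm : MeasurableSet K := hK.isClosed.measurableSet
  set μ := hyperMeasure n with hμdef
  set F : Hyp n → Hyp n → ℝ :=
    (fun z w => u w * ψ (hyperMul n (hyperInv n w) z)) with hFdef
  set F' : Hyp n → Hyp n → (Hyp n →L[ℝ] ℝ) := (fun z w =>
    u w • ((fderiv ℝ ψ (hyperMul n (hyperInv n w) z)).comp
      (w.2⁻¹ • ContinuousLinearMap.id ℝ (Hyp n)))) with hF'def
  obtain ⟨M, hM⟩ := (hψcs.fderiv (𝕜 := ℝ)).exists_bound_of_continuous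
    (hψ.continuous_fderiv (by simp))
  have hM0 : 0 ≤ M := le_trans (norm_nonneg _) (hM (0, 1))
  obtain ⟨Cu, hCu⟩ := hK.exists_bound_of_continuousOn hu.continuousOn
  obtain ⟨Cψ, hCψ⟩ := hψcs.exists_bound_of_continuous hψ.continuous
  have hCψ0 : 0 ≤ Cψ := le_trans (norm_nonneg _) (hCψ (0, 1))
  -- differentiability in the parameter
  have h_diff : ∀ (w : Hyp n), ∀ z, HasFDerivAt (fun z' => F z' w) (F' z w) z := by
    intro w z
    have h1 := ((hψ.differentiable (by simp))
      (hyperMul n (hyperInv n w) z)).hasFDerivAt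
    exact (h1.comp z (hasFDerivAt_arg w z)).const_mul (u w)
  -- vanishing of F' off K
  have hF'0 : ∀ z ∈ Metric.closedBall z₀ ε, ∀ w ∉ K, F' z w = 0 := by
    intro z hz w hw
    rw [hF'def]
    simp only [(hKz z hz w hw).2, ContinuousLinearMap.zero_comp, smul_zero]
  -- norm bound for F'
  have hbound : ∀ w ∈ K, ∀ z : Hyp n, ‖F' z w‖ ≤ ‖u w‖ * (M * c⁻¹) := by
    intro w hw z
    have hw2 : 0 < w.2 := lt_of_lt_of_le hc (hKc w hw)
    have hns : ‖F' z w‖ ≤ ‖u w‖ * ‖(fderiv ℝ ψ (hyperMul n (hyperInv n w) z)).comp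
        (w.2⁻¹ • ContinuousLinearMap.id ℝ (Hyp n))‖ := by
      rw [hF'def]; exact ContinuousLinearMap.opNorm_smul_le _ _
    refine le_trans hns ?_
    refine mul_le_mul_of_nonneg_left ?_ (norm_nonneg (u w))
    refine le_trans (ContinuousLinearMap.opNorm_comp_le _ _) ?_
    have h1 : ‖w.2⁻¹ • ContinuousLinearMap.id ℝ (Hyp n)‖ ≤ c⁻¹ := by
      refine le_trans (ContinuousLinearMap.opNorm_smul_le _ _) ?_
      rw [Real.norm_eq_abs, abs_of_pos (inv_pos.2 hw2)]
      calc w.2⁻¹ * ‖ContinuousLinearMap.id ℝ (Hyp n)‖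
          ≤ w.2⁻¹ * 1 := by
            exact mul_le_mul_of_nonneg_left ContinuousLinearMap.norm_id_le (inv_pos.2 hw2).le
        _ = w.2⁻¹ := mul_one _
        _ ≤ c⁻¹ := inv_anti₀ hc (hKc w hw)
    exact mul_le_mul (hM _) h1 (norm_nonneg _) hM0
  -- measurability
  have hmeasF : ∀ z, AEStronglyMeasurable (F z) μ := fun z =>
    ((hu.measurable.mul
      ((hψ.continuous.measurable).comp (measurable_arg n z)))).aestronglyMeasurable
  have hmeasF' : AEStronglyMeasurable (F' z₀) μ := by
    have hΦ : Continuous fun q : ℝ × ((Hyp n →L[ℝ] ℝ) × ℝ) =>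
        q.1 • (q.2.1.comp (q.2.2 • ContinuousLinearMap.id ℝ (Hyp n))) := by fun_prop
    have hm : Measurable fun w : Hyp n =>
        ((u w, (fderiv ℝ ψ (hyperMul n (hyperInv n w) z₀), w.2⁻¹)) :
          ℝ × ((Hyp n →L[ℝ] ℝ) × ℝ)) := by
      refine hu.measurable.prodMk (Measurable.prodMk ?_ measurable_snd.inv)
      exact ((hψ.continuous_fderiv (by simp)).measurable).comp (measurable_arg n z₀)
    exact ((hΦ.measurable.comp hm)).aestronglyMeasurable
  -- integrability
  have hFint : Integrable (F z₀) μ := by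
    refine integrable_of_supported hK hc hKc (hmeasF z₀)
      (fun w hw => ?_) (C := Cu * Cψ) (fun w hw => ?_)
    · rw [hFdef]; simp only [(hKz z₀ hz₀K w hw).1, mul_zero]
    · rw [hFdef]
      simp only [norm_mul]
      exact mul_le_mul (hCu w hw) (hCψ _) (norm_nonneg _)
        (le_trans (norm_nonneg _) (hCu w hw))
  have hF'int : Integrable (F' z₀) μ := by
    refine integrable_of_supported hK hc hKc hmeasF'
      (fun w hw => hF'0 z₀ hz₀K w hw) (C := Cu * (M * c⁻¹)) (fun w hw => ?_)
    refine le_trans (hbound w hw z₀) ?_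
    refine mul_le_mul_of_nonneg_right (hCu w hw) ?_
    positivity
  -- dominated differentiation under the integral sign
  set bnd : Hyp n → ℝ := K.indicator (fun _ => Cu * (M * c⁻¹)) with hbnddef
  have hbndint : Integrable bnd μ := by
    refine integrable_of_supported hK hc hKc
      ((measurable_const.indicator hKm).aestronglyMeasurable)
      (fun w hw => Set.indicator_of_notMem hw _) (C := |Cu * (M * c⁻¹)|)
      (fun w hw => ?_)
    rw [hbnddef, Set.indicator_of_mem hw]
    exact (Real.norm_eq_abs _).le
  have h_bnd : ∀ᵐ w ∂μ, ∀ z ∈ Metric.ball z₀ ε, ‖F' z w‖ ≤ bnd w := by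
    refine Filter.Eventually.of_forall fun w z hz => ?_
    by_cases hw : w ∈ K
    · rw [hbnddef, Set.indicator_of_mem hw]
      refine le_trans (hbound w hw z) ?_
      refine mul_le_mul_of_nonneg_right (hCu w hw) ?_
      positivity
    · rw [hbnddef, Set.indicator_of_notMem hw,
        hF'0 z (Metric.ball_subset_closedBall hz) w hw, norm_zero]
  have hasF : HasFDerivAt (fun z => ∫ w, F z w ∂μ) (∫ w, F' z₀ w ∂μ) z₀ := by
    refine hasFDerivAt_integral_of_dominated_of_fderiv_le (Metric.ball_mem_nhds z₀ hε)
      (Filter.Eventually.of_forall hmeasF) (hFint) hmeasF' h_bnd hbndint ?_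
    exact Filter.Eventually.of_forall fun w z _ => h_diff w z
  have hconv : hyperConv n u ψ = fun z => ∫ w, F z w ∂μ := rfl
  have hfd : fderiv ℝ (hyperConv n u ψ) z₀ = ∫ w, F' z₀ w ∂μ := by
    rw [hconv]; exact hasF.fderiv
  rw [hfd, ContinuousLinearMap.integral_apply hF'int, ← integral_const_mul]
  refine integral_congr_ae (Filter.Eventually.of_forall fun w => ?_)
  show z₀.2 * (F' z₀ w) v
    = u w * ((hyperMul n (hyperInv n w) z₀).2
        * fderiv ℝ ψ (hyperMul n (hyperInv n w) z₀) v)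
  rw [hF'def]
  simp only [ContinuousLinearMap.coe_smul', Pi.smul_apply,
    ContinuousLinearMap.coe_comp', Function.comp_apply,
    ContinuousLinearMap.smul_apply, ContinuousLinearMap.coe_id', id_eq,
    _root_.map_smul, smul_eq_mul, arg_snd]
  ring

end HypAux

namespace HypAux

lemma smooth (n : ℕ) (u ψ : Hyp n → ℝ) (hu : Continuous u)
    (hψ : ContDiff ℝ (⊤ : ℕ∞) ψ) (hψcs : HasCompactSupport ψ)
    (hψs : tsupport ψ ⊆ {z : Hyp n | 0 < z.2}) :
    ContDiffOn ℝ (⊤ : ℕ∞) (hyperConv n u ψ) {z : Hyp n | 0 < z.2} := by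
  refine contDiffOn_of_locally_contDiffOn fun z₀ hz₀ => ?_
  obtain ⟨ε, c, K, hε, hc, hK, hKc, hball, hKz⟩ :=
    exists_localization n ψ hψcs hψs z₀ hz₀
  refine ⟨Metric.ball z₀ ε, Metric.isOpen_ball, Metric.mem_ball_self hε, ?_⟩
  set Ψ : Hyp n → Hyp n → ℝ :=
    (fun z w => if 0 < w.2 then ψ (hyperMul n (hyperInv n w) z) else 0) with hΨdef
  set f : Hyp n → ℝ := (fun w => u w * (max w.2 (c / 2)) ^ (-(n : ℝ))) with hfdef
  set g : Hyp n → Hyp n → ℝ := (fun z t => Ψ z (-t)) with hgdef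
  have hΨ0 : ∀ z ∈ Metric.closedBall z₀ ε, ∀ w ∉ K, Ψ z w = 0 := by
    intro z hz w hw
    by_cases h : 0 < w.2
    · rw [hΨdef]; simp only [if_pos h, (hKz z hz w hw).1]
    · rw [hΨdef]; simp only [if_neg h]
  have hΨlow : ∀ z ∈ Metric.closedBall z₀ ε, ∀ w : Hyp n, w.2 < c → Ψ z w = 0 := by
    intro z hz w hlow
    exact hΨ0 z hz w fun hwK => absurd (hKc w hwK) (not_le.2 hlow)
  -- `f` is continuous, hence locally integrable
  have hfc : Continuous f := by
    refine hu.mul ?_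
    refine continuous_iff_continuousAt.2 fun w => ?_
    refine ContinuousAt.rpow_const ?_ (Or.inl ?_)
    · exact (continuous_snd.max continuous_const).continuousAt
    · have : (0 : ℝ) < max w.2 (c / 2) := lt_of_lt_of_le (half_pos hc) (le_max_right _ _)
      exact this.ne'
  have hfli : LocallyIntegrable f (volume : Measure (Hyp n)) := hfc.locallyIntegrable
  -- smoothness of the uncurried version of `g`
  have hg : ContDiffOn ℝ (⊤ : ℕ∞) (Function.uncurry g)
      (Metric.ball z₀ ε ×ˢ Set.univ) := by
    intro q hq
    refine ContDiffAt.contDiffWithinAt ?_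
    by_cases hcase : c / 2 < -q.2.2
    · have hopen : IsOpen {p : Hyp n × Hyp n | c / 2 < -p.2.2} :=
        isOpen_lt continuous_const (continuous_snd.snd.neg)
      have hev : Function.uncurry g =ᶠ[nhds q]
          fun p : Hyp n × Hyp n => ψ (hyperMul n (hyperInv n (-p.2)) p.1) := by
        filter_upwards [hopen.mem_nhds hcase] with p hp
        have hpos : 0 < (-p.2).2 := lt_trans (half_pos hc) hp
        show Ψ p.1 (-p.2) = _
        rw [hΨdef]; simp only [if_pos hpos]
      refine ContDiffAt.congr_of_eventuallyEq ?_ hev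
      have hne : (-q.2).2 ≠ 0 := ne_of_gt (lt_trans (half_pos hc) hcase)
      have hinv : ContDiffAt ℝ (⊤ : ℕ∞) (fun p : Hyp n × Hyp n => (-p.2.2)⁻¹) q :=
        ContDiffAt.inv (contDiff_snd.snd.neg).contDiffAt hne
      have harg : ContDiffAt ℝ (⊤ : ℕ∞)
          (fun p : Hyp n × Hyp n => hyperMul n (hyperInv n (-p.2)) p.1) q := by
        show ContDiffAt ℝ (⊤ : ℕ∞) (fun p : Hyp n × Hyp n =>
          (((-(-p.2.2)⁻¹) • (-p.2.1) + (-p.2.2)⁻¹ • p.1.1, (-p.2.2)⁻¹ * p.1.2) : Hyp n)) q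
        refine ContDiffAt.prodMk ?_ ?_
        · exact (hinv.neg.smul (contDiff_snd.fst.neg).contDiffAt).add
            (hinv.smul (contDiff_fst.fst).contDiffAt)
        · exact hinv.mul (contDiff_fst.snd).contDiffAt
      exact (hψ.contDiffAt).comp q harg
    · have hopen : IsOpen {p : Hyp n × Hyp n | p.1 ∈ Metric.ball z₀ ε ∧ -p.2.2 < c} :=
        (Metric.isOpen_ball.preimage continuous_fst).inter
          (isOpen_lt (continuous_snd.snd.neg) continuous_const)
      have hq' : q ∈ {p : Hyp n × Hyp n | p.1 ∈ Metric.ball z₀ ε ∧ -p.2.2 < c} :=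
        ⟨(Set.mem_prod.1 hq).1, lt_of_le_of_lt (not_lt.1 hcase) (half_lt_self hc)⟩
      have hev : Function.uncurry g =ᶠ[nhds q] (fun _ => (0 : ℝ)) := by
        filter_upwards [hopen.mem_nhds hq'] with p hp
        show Ψ p.1 (-p.2) = 0
        exact hΨlow p.1 (Metric.ball_subset_closedBall hp.1) (-p.2) hp.2
      exact contDiffAt_const.congr_of_eventuallyEq hev
  -- support condition for `g`
  have hgs : ∀ p x, p ∈ Metric.ball z₀ ε → x ∉ -K → g p x = 0 := by
    intro p x hp hx
    exact hΨ0 p (Metric.ball_subset_closedBall hp) (-x) fun h => hx (Set.mem_neg.2 h)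
  have hcd := contDiffOn_convolution_right_with_param_comp
    (ContinuousLinearMap.lsmul ℝ ℝ)
    (contDiffOn_const (c := (0 : Hyp n))) Metric.isOpen_ball hK.neg hgs hfli hg
  -- `hcd : ContDiffOn ℝ ⊤ (fun z => (f ⋆[lsmul, volume] g z) 0) (ball z₀ ε)`
  refine ContDiffOn.congr (hcd.mono Set.inter_subset_right) ?_
  intro z hz
  -- equality of `hyperConv` with the convolution on the ball
  have hzball : z ∈ Metric.closedBall z₀ ε :=
    Metric.ball_subset_closedBall hz.2
  show hyperConv n u ψ z = (convolution f (g z) (ContinuousLinearMap.lsmul ℝ ℝ) volume) 0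
  have hmeas : Measurable fun w : Hyp n => (w.2 ^ (-(n : ℝ))).toNNReal :=
    (measurable_snd.pow_const _).real_toNNReal
  have hsmeas : MeasurableSet {p : Hyp n | 0 < p.2} :=
    measurableSet_lt measurable_const measurable_snd
  have hpt : ∀ w : Hyp n,
      Set.indicator {p : Hyp n | 0 < p.2}
        (fun w => ((w.2 ^ (-(n : ℝ))).toNNReal : ℝ≥0) •
          (u w * ψ (hyperMul n (hyperInv n w) z))) w = f w * Ψ z w := by
    intro w
    by_cases h : 0 < w.2
    · rw [Set.indicator_of_mem (by exact h)]
      have hco : (((w.2 ^ (-(n : ℝ))).toNNReal : ℝ≥0) : ℝ) = w.2 ^ (-(n : ℝ)) :=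
        Real.coe_toNNReal _ (Real.rpow_pos_of_pos h _).le
      rw [NNReal.smul_def, smul_eq_mul, hco, hΨdef]
      simp only [if_pos h, hfdef]
      by_cases hc2 : c / 2 ≤ w.2
      · rw [max_eq_left hc2]; ring
      · have hwK : w ∉ K := fun hwK =>
          hc2 (le_trans (by linarith : c / 2 ≤ c) (hKc w hwK))
        rw [(hKz z hzball w hwK).1]
        ring
    · rw [Set.indicator_of_notMem (by exact h), hΨdef]
      simp only [if_neg h, mul_zero]
  have h1 : hyperConv n u ψ z
      = ∫ w, ((w.2 ^ (-(n : ℝ))).toNNReal : ℝ≥0) •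
          (u w * ψ (hyperMul n (hyperInv n w) z))
          ∂((volume : Measure (Hyp n)).restrict {p : Hyp n | 0 < p.2}) := by
    show ∫ w, u w * ψ (hyperMul n (hyperInv n w) z) ∂(hyperMeasure n) = _
    rw [hyperMeasure]
    exact integral_withDensity_eq_integral_smul hmeas _
  rw [h1, ← integral_indicator hsmeas]
  rw [convolution_def]
  refine integral_congr_ae (Filter.Eventually.of_forall fun w => ?_)
  rw [hpt w]
  show f w * Ψ z w = (ContinuousLinearMap.lsmul ℝ ℝ) (f w) (g z (0 - w))
  rw [hgdef]
  simp only [zero_sub, neg_neg, ContinuousLinearMap.lsmul_apply, smul_eq_mul]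

end HypAux

/-- `ℍ`-convolution with a smooth compactly supported mollifier is smooth on `ℍ` and
intertwines the left-invariant vector fields `y∂_{x_i}` and `y∂_y`:
`y ∂_{x_i}(u ∗ ψ) = u ∗ (η ∂_{ξ_i}ψ)` and `y ∂_y(u ∗ ψ) = u ∗ (η ∂_η ψ)`. -/
theorem hyperConv_smooth_and_intertwines (n : ℕ) (hn : 1 ≤ n)
    (u ψ : EuclideanSpace ℝ (Fin (n - 1)) × ℝ → ℝ)
    (hu : Continuous u) (hψ : ContDiff ℝ (⊤ : ℕ∞) ψ) (hψcs : HasCompactSupport ψ)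
    (hψs : tsupport ψ ⊆ {z : EuclideanSpace ℝ (Fin (n - 1)) × ℝ | 0 < z.2}) :
    ContDiffOn ℝ (⊤ : ℕ∞) (hyperConv n u ψ)
      {z : EuclideanSpace ℝ (Fin (n - 1)) × ℝ | 0 < z.2} ∧
    ∀ z : EuclideanSpace ℝ (Fin (n - 1)) × ℝ, 0 < z.2 →
      (∀ i : Fin (n - 1),
        z.2 * fderiv ℝ (hyperConv n u ψ) z (EuclideanSpace.single i (1 : ℝ), (0 : ℝ)) =
          hyperConv n u
            (fun w => w.2 * fderiv ℝ ψ w (EuclideanSpace.single i (1 : ℝ), (0 : ℝ))) z) ∧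
      z.2 * fderiv ℝ (hyperConv n u ψ) z ((0 : EuclideanSpace ℝ (Fin (n - 1))), (1 : ℝ)) =
        hyperConv n u
          (fun w => w.2 * fderiv ℝ ψ w ((0 : EuclideanSpace ℝ (Fin (n - 1))), (1 : ℝ))) z := by
  refine ⟨HypAux.smooth n u ψ hu hψ hψcs hψs, fun z hz => ⟨fun i => ?_, ?_⟩⟩
  · exact HypAux.intertwine n u ψ hu hψ hψcs hψs z hz (EuclideanSpace.single i (1 : ℝ), (0 : ℝ))
  · exact HypAux.intertwine n u ψ hu hψ hψcs hψs z hz ((0 : EuclideanSpace ℝ (Fin (n - 1))), (1 : ℝ))
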